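/- Let A ∈ ℝ^{m×m}, B₀ ∈ ℝ^{m×d}, k ≥ 0 an integer, and c > 0 be such that ⟨(∫₀ᵗ e^{sA}B₀B₀*e^{sA*} ds) a, a⟩ ≥ c (min(t,1))^{2k+1} |a|² for all t > 0 and a ∈ ℝᵐ. Then there exist constants c₁, c₂ > 0, depending only on A, B₀, k and c, such that for every T > 0 and every t ∈ (0, T/2], ⟨(∫₀ᵗ (s(T−s)/T²) e^{(T−s)A}B₀B₀*e^{(T−s)A*} ds) a, a⟩ ≥ (c₁ t^{2(k+1)} / (4T e^{c₂T})) |a|² for all a ∈ ℝᵐ. -/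

import Mathlib

open scoped RealInnerProductSpace
open MeasureTheory NormedSpace

section Aux

variable {E F : Type*} [NormedAddCommGroup E] [InnerProductSpace ℝ E] [CompleteSpace E]
  [NormedAddCommGroup F] [InnerProductSpace ℝ F] [CompleteSpace F]

/-- swap inner product and interval integral of an operator-valued function -/
theorem my_inner_swap (f : ℝ → E →L[ℝ] E) (hf : Continuous f) (x y : ℝ) (a : E) :
    ⟪(∫ s in x..y, f s) a, a⟫ = ∫ s in x..y, ⟪f s a, a⟫ := by
  rw [intervalIntegral.intervalIntegral_eq_integral_uIoc,
      intervalIntegral.intervalIntegral_eq_integral_uIoc]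
  have hint : IntegrableOn f (Set.uIoc x y) := by
    exact intervalIntegrable_iff.mp (hf.intervalIntegrable x y)
  have h2 : IntegrableOn (fun s => f s a) (Set.uIoc x y) := by
    rw [← intervalIntegrable_iff]
    exact (hf.clm_apply continuous_const).intervalIntegrable x y
  simp only [ContinuousLinearMap.smul_apply, real_inner_smul_left, smul_eq_mul]
  congr 1
  rw [ContinuousLinearMap.integral_apply hint, real_inner_comm, ← integral_inner h2 a]
  exact integral_congr_ae (Filter.Eventually.of_forall fun s => real_inner_comm _ _)

theorem my_quad (C : F →L[ℝ] E) (a : E) :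
    ⟪(C.comp (ContinuousLinearMap.adjoint C)) a, a⟫
      = ‖ContinuousLinearMap.adjoint C a‖ ^ 2 := by
  rw [← real_inner_self_eq_norm_sq, ContinuousLinearMap.comp_apply, real_inner_comm]
  exact (ContinuousLinearMap.adjoint_inner_left C (ContinuousLinearMap.adjoint C a) a).symm

omit [CompleteSpace E] in
theorem my_norm_exp_le (X : E →L[ℝ] E) : ‖exp X‖ ≤ Real.exp ‖X‖ := by
  rw [exp_eq_tsum (𝕂 := ℝ), Real.exp_eq_exp_ℝ, exp_eq_tsum_div]
  refine (norm_tsum_le_tsum_norm (norm_expSeries_summable' X)).trans ?_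
  refine Summable.tsum_le_tsum (fun n => ?_) (norm_expSeries_summable' X)
    (Real.summable_pow_div_factorial ‖X‖)
  rw [norm_smul, norm_inv, Real.norm_natCast, div_eq_inv_mul]
  cases n with
  | zero => simp; exact ContinuousLinearMap.norm_id_le
  | succ n =>
    exact mul_le_mul_of_nonneg_left (norm_pow_le' X n.succ_ne_zero.bot_lt) (by positivity)

set_option synthInstance.maxHeartbeats 1000000 in
theorem my_exp_split (A : E →L[ℝ] E) (u v : ℝ) :
    exp ((u + v) • A) = (exp (u • A)).comp (exp (v • A)) := by
  have hcomm : Commute (u • A) (v • A) := by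
    unfold Commute SemiconjBy
    rw [smul_mul_smul_comm, smul_mul_smul_comm, mul_comm u v]
  letI : NormedAlgebra ℚ (E →L[ℝ] E) := NormedAlgebra.restrictScalars ℚ ℝ _
  rw [add_smul, exp_add_of_commute hcomm]
  rfl

end Aux

section Main

variable {m d : ℕ}

/-- `e^{sA} B₀`. -/
noncomputable def myD (A : EuclideanSpace ℝ (Fin m) →L[ℝ] EuclideanSpace ℝ (Fin m))
    (B₀ : EuclideanSpace ℝ (Fin d) →L[ℝ] EuclideanSpace ℝ (Fin m)) (s : ℝ) :
    EuclideanSpace ℝ (Fin d) →L[ℝ] EuclideanSpace ℝ (Fin m) :=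
  (exp (s • A)).comp B₀

theorem myD_cont (A : EuclideanSpace ℝ (Fin m) →L[ℝ] EuclideanSpace ℝ (Fin m))
    (B₀ : EuclideanSpace ℝ (Fin d) →L[ℝ] EuclideanSpace ℝ (Fin m)) :
    Continuous fun s => myD A B₀ s := by
  letI : NormedAlgebra ℚ (EuclideanSpace ℝ (Fin m) →L[ℝ] EuclideanSpace ℝ (Fin m)) :=
    NormedAlgebra.restrictScalars ℚ ℝ _
  exact (exp_continuous.comp (continuous_id.smul continuous_const)).clm_comp continuous_const

theorem myD_adj_cont (A : EuclideanSpace ℝ (Fin m) →L[ℝ] EuclideanSpace ℝ (Fin m))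
    (B₀ : EuclideanSpace ℝ (Fin d) →L[ℝ] EuclideanSpace ℝ (Fin m)) :
    Continuous fun s => ContinuousLinearMap.adjoint (myD A B₀ s) :=
  (ContinuousLinearMap.adjoint
    (𝕜 := ℝ) (E := EuclideanSpace ℝ (Fin d))
    (F := EuclideanSpace ℝ (Fin m))).continuous.comp (myD_cont A B₀)

/-- the integrand of the Gramian, rewritten as `D D*`. -/
theorem myD_op (A : EuclideanSpace ℝ (Fin m) →L[ℝ] EuclideanSpace ℝ (Fin m))
    (B₀ : EuclideanSpace ℝ (Fin d) →L[ℝ] EuclideanSpace ℝ (Fin m)) (s : ℝ) :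
    ((exp (s • A)).comp B₀).comp
        (B₀.adjoint.comp (ContinuousLinearMap.adjoint (exp (s • A))))
      = (myD A B₀ s).comp (ContinuousLinearMap.adjoint (myD A B₀ s)) := by
  rw [myD, ContinuousLinearMap.adjoint_comp]

end Main

set_option maxHeartbeats 2000000 in
set_option synthInstance.maxHeartbeats 400000 in
/-- the intermediate estimate in the proof of Theorem 4.2(1).
If the controllability Gramian satisfies `U_t = ∫₀ᵗ e^{sA}B₀B₀*e^{sA*} ds ≥ c(t∧1)^{2k+1} I`
for all `t > 0`, then for `M_t = ∫₀ᵗ (s(T−s)/T²) e^{(T−s)A}B₀B₀*e^{(T−s)A*} ds` one has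
`M_t ≥ (c₁ t^{2(k+1)}/(4T e^{c₂T})) I` for all `T > 0` and `t ∈ (0, T/2]`. -/
theorem stmt9 (m d k : ℕ)
    (A : EuclideanSpace ℝ (Fin m) →L[ℝ] EuclideanSpace ℝ (Fin m))
    (B₀ : EuclideanSpace ℝ (Fin d) →L[ℝ] EuclideanSpace ℝ (Fin m))
    (c : ℝ) (hc : 0 < c)
    (hU : ∀ t : ℝ, 0 < t → ∀ a : EuclideanSpace ℝ (Fin m),
      c * min t 1 ^ (2 * k + 1) * ‖a‖ ^ 2 ≤
        ⟪(∫ s in (0:ℝ)..t,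
            (((NormedSpace.exp (s • A)).comp B₀).comp
              (B₀.adjoint.comp (NormedSpace.exp (s • A)).adjoint))) a, a⟫) :
    ∃ c₁ > (0:ℝ), ∃ c₂ > (0:ℝ), ∀ T : ℝ, 0 < T → ∀ t ∈ Set.Ioc (0:ℝ) (T / 2),
      ∀ a : EuclideanSpace ℝ (Fin m),
        (c₁ * t ^ (2 * (k + 1)) / (4 * T * Real.exp (c₂ * T))) * ‖a‖ ^ 2 ≤
          ⟪(∫ s in (0:ℝ)..t, (s * (T - s) / T ^ 2) •
              (((NormedSpace.exp ((T - s) • A)).comp B₀).comp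
                (B₀.adjoint.comp (NormedSpace.exp ((T - s) • A)).adjoint))) a, a⟫ := by
  classical
  letI : NormedAlgebra ℚ (EuclideanSpace ℝ (Fin m) →L[ℝ] EuclideanSpace ℝ (Fin m)) :=
    NormedAlgebra.restrictScalars ℚ ℝ _
  refine ⟨c / 2 ^ (2 * k + 1), by positivity,
    2 * ‖A‖ + (2 * (k:ℝ) + 1) / 4 + 1, by positivity, ?_⟩
  intro T hT t ht a
  obtain ⟨ht0, ht2⟩ := ht
  set b : EuclideanSpace ℝ (Fin m) :=
    ContinuousLinearMap.adjoint (exp ((T - t) • A)) a with hbdef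
  -- scalar integrands
  set g : ℝ → ℝ := fun s => ‖ContinuousLinearMap.adjoint (myD A B₀ (T - s)) a‖ ^ 2 with hgdef
  set h : ℝ → ℝ := fun u => ‖ContinuousLinearMap.adjoint (myD A B₀ u) b‖ ^ 2 with hhdef
  have hgc : Continuous g :=
    ((((myD_adj_cont A B₀).comp (continuous_const.sub continuous_id)).clm_apply
      continuous_const).norm.pow 2)
  have hhc : Continuous h := (((myD_adj_cont A B₀).clm_apply continuous_const).norm.pow 2)
  have hφc : Continuous fun s : ℝ => s * (T - s) / T ^ 2 :=
    ((continuous_id.mul (continuous_const.sub continuous_id)).div_const _)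
  have hgnn : ∀ s, 0 ≤ g s := fun s => by positivity
  -- Step 1: the LHS quadratic form as a scalar integral
  have hLHS : ⟪(∫ s in (0:ℝ)..t, (s * (T - s) / T ^ 2) •
      (((NormedSpace.exp ((T - s) • A)).comp B₀).comp
        (B₀.adjoint.comp (NormedSpace.exp ((T - s) • A)).adjoint))) a, a⟫
      = ∫ s in (0:ℝ)..t, (s * (T - s) / T ^ 2) * g s := by
    have h1 : Continuous fun s : ℝ => NormedSpace.exp ((T - s) • A) :=
      exp_continuous.comp ((continuous_const.sub continuous_id).smul continuous_const)
    have h2 : Continuous fun s : ℝ =>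
        ContinuousLinearMap.adjoint (NormedSpace.exp ((T - s) • A)) :=
      (ContinuousLinearMap.adjoint (𝕜 := ℝ) (E := EuclideanSpace ℝ (Fin m))
        (F := EuclideanSpace ℝ (Fin m))).continuous.comp h1
    rw [my_inner_swap (fun s => (s * (T - s) / T ^ 2) •
        (((NormedSpace.exp ((T - s) • A)).comp B₀).comp
          (B₀.adjoint.comp (NormedSpace.exp ((T - s) • A)).adjoint))) (hφc.smul ((h1.clm_comp continuous_const).clm_comp
      (continuous_const.clm_comp h2))) 0 t a]
    refine intervalIntegral.integral_congr fun s _ => ?_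
    rw [ContinuousLinearMap.smul_apply, real_inner_smul_left, myD_op, my_quad]
  rw [hLHS]
  -- relate `g` on `[t/2, t]` to `h` on `[0, t/2]`
  have hgh : ∀ s : ℝ, g s = h (t - s) := by
    intro s
    have hsplit : NormedSpace.exp ((T - s) • A)
        = (NormedSpace.exp ((T - t) • A)).comp (NormedSpace.exp ((t - s) • A)) := by
      rw [← my_exp_split]
      congr 2
      ring
    simp only [hgdef, hhdef, hbdef, myD]
    rw [hsplit, ContinuousLinearMap.comp_assoc, ContinuousLinearMap.adjoint_comp,
        ContinuousLinearMap.comp_apply]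
  -- basic interval integral manipulations
  have hI0 : (∫ s in (t/2)..t, (s * (T - s) / T ^ 2) * g s)
      ≤ ∫ s in (0:ℝ)..t, (s * (T - s) / T ^ 2) * g s := by
    have hii1 : IntervalIntegrable (fun s => (s * (T - s) / T ^ 2) * g s) volume 0 (t/2) :=
      (hφc.mul hgc).intervalIntegrable _ _
    have hii2 : IntervalIntegrable (fun s => (s * (T - s) / T ^ 2) * g s) volume (t/2) t :=
      (hφc.mul hgc).intervalIntegrable _ _
    rw [← intervalIntegral.integral_add_adjacent_intervals hii1 hii2]
    have hnn : 0 ≤ ∫ s in (0:ℝ)..(t/2), (s * (T - s) / T ^ 2) * g s := by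
      refine intervalIntegral.integral_nonneg (by linarith) fun s hs => ?_
      obtain ⟨hs0, hs1⟩ := hs
      have h1 : 0 ≤ s * (T - s) / T ^ 2 :=
        div_nonneg (mul_nonneg hs0 (by linarith)) (by positivity)
      exact mul_nonneg h1 (hgnn s)
    linarith
  have hI1 : (∫ s in (t/2)..t, (t / (4 * T)) * g s)
      ≤ ∫ s in (t/2)..t, (s * (T - s) / T ^ 2) * g s := by
    refine intervalIntegral.integral_mono_on (by linarith)
      ((continuous_const.mul hgc).intervalIntegrable _ _)
      ((hφc.mul hgc).intervalIntegrable _ _) fun s hs => ?_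
    obtain ⟨hs1, hs2⟩ := hs
    have hcoef : t / (4 * T) ≤ s * (T - s) / T ^ 2 := by
      rw [div_le_div_iff₀ (by positivity) (by positivity)]
      have h6 : (t/2) * (T/2) ≤ s * (T - s) :=
        mul_le_mul (by linarith) (by linarith) (by linarith) (by linarith)
      nlinarith [mul_le_mul_of_nonneg_left h6 (by linarith : (0:ℝ) ≤ 4 * T)]
    exact mul_le_mul_of_nonneg_right hcoef (hgnn s)
  have hI2 : (∫ s in (t/2)..t, (t / (4 * T)) * g s)
      = (t / (4 * T)) * ∫ s in (t/2)..t, g s :=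
    intervalIntegral.integral_const_mul _ _
  have hI3 : (∫ s in (t/2)..t, g s) = ∫ u in (0:ℝ)..(t/2), h u := by
    rw [intervalIntegral.integral_congr fun s _ => hgh s,
        intervalIntegral.integral_comp_sub_left h t,
        show t - t = (0:ℝ) by ring, show t - t/2 = t/2 by ring]
  -- the Gramian bound at time `t/2`, for vector `b`
  have hI4 : (∫ u in (0:ℝ)..(t/2), h u)
      = ⟪(∫ s in (0:ℝ)..(t/2),
          (((NormedSpace.exp (s • A)).comp B₀).comp
            (B₀.adjoint.comp (NormedSpace.exp (s • A)).adjoint))) b, b⟫ := by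
    have h1 : Continuous fun s : ℝ => NormedSpace.exp (s • A) :=
      exp_continuous.comp (continuous_id.smul continuous_const)
    have h2 : Continuous fun s : ℝ =>
        ContinuousLinearMap.adjoint (NormedSpace.exp (s • A)) :=
      (ContinuousLinearMap.adjoint (𝕜 := ℝ) (E := EuclideanSpace ℝ (Fin m))
        (F := EuclideanSpace ℝ (Fin m))).continuous.comp h1
    rw [my_inner_swap _ ((h1.clm_comp continuous_const).clm_comp
      (continuous_const.clm_comp h2)) 0 (t/2) b]
    refine intervalIntegral.integral_congr fun s _ => ?_
    simp only [hhdef]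
    rw [myD_op, my_quad]
  have hUb : c * min (t/2) 1 ^ (2 * k + 1) * ‖b‖ ^ 2 ≤ ∫ u in (0:ℝ)..(t/2), h u := by
    rw [hI4]; exact hU (t/2) (by linarith) b
  -- comparing the norms of `a` and `b`
  have hba : ContinuousLinearMap.adjoint (NormedSpace.exp ((-(T - t)) • A)) b = a := by
    rw [hbdef, ← ContinuousLinearMap.comp_apply, ← ContinuousLinearMap.adjoint_comp,
        ← my_exp_split, show (T - t) + -(T - t) = (0:ℝ) by ring, zero_smul, exp_zero,
        ContinuousLinearMap.one_def, ContinuousLinearMap.adjoint_id,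
        ContinuousLinearMap.id_apply]
  have hnb : ‖a‖ ≤ Real.exp (‖A‖ * T) * ‖b‖ := by
    calc ‖a‖ = ‖ContinuousLinearMap.adjoint (NormedSpace.exp ((-(T - t)) • A)) b‖ := by
          rw [hba]
      _ ≤ ‖ContinuousLinearMap.adjoint (NormedSpace.exp ((-(T - t)) • A))‖ * ‖b‖ :=
          ContinuousLinearMap.le_opNorm _ _
      _ = ‖NormedSpace.exp ((-(T - t)) • A)‖ * ‖b‖ := by
          rw [LinearIsometryEquiv.norm_map]
      _ ≤ Real.exp ‖(-(T - t)) • A‖ * ‖b‖ :=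
          mul_le_mul_of_nonneg_right (my_norm_exp_le _) (norm_nonneg _)
      _ ≤ Real.exp (‖A‖ * T) * ‖b‖ := by
          refine mul_le_mul_of_nonneg_right (Real.exp_le_exp.mpr ?_) (norm_nonneg _)
          have hns : ‖(-(T - t)) • A‖ = ‖(-(T - t) : ℝ)‖ * ‖A‖ := norm_smul (-(T - t)) A
          rw [hns, Real.norm_eq_abs, abs_neg,
            abs_of_nonneg (by linarith : (0:ℝ) ≤ T - t)]
          nlinarith [norm_nonneg A]
  have hab2 : ‖a‖ ^ 2 ≤ Real.exp (2 * ‖A‖ * T) * ‖b‖ ^ 2 := by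
    have h2 := pow_le_pow_left₀ (norm_nonneg a) hnb 2
    rw [mul_pow] at h2
    calc ‖a‖ ^ 2 ≤ Real.exp (‖A‖ * T) ^ 2 * ‖b‖ ^ 2 := h2
      _ = Real.exp (2 * ‖A‖ * T) * ‖b‖ ^ 2 := by
          rw [← Real.exp_nat_mul]
          congr 1
          push_cast
          ring
  -- the min bound
  have hmin : (t/2) ^ (2 * k + 1) * Real.exp (-((2 * (k:ℝ) + 1) / 4 + 1) * T)
      ≤ min (t/2) 1 ^ (2 * k + 1) := by
    rcases le_total (t/2) 1 with h1 | h1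
    · rw [min_eq_left h1]
      refine mul_le_of_le_one_right (by positivity) (Real.exp_le_one_iff.mpr ?_)
      nlinarith [Nat.cast_nonneg (α := ℝ) k]
    · rw [min_eq_right h1, one_pow]
      have h2 : t/2 ≤ T/4 := by linarith
      have h3 : (t/2) ^ (2 * k + 1) ≤ Real.exp ((2 * (k:ℝ) + 1) * (T/4)) := by
        calc (t/2) ^ (2 * k + 1) ≤ (T/4) ^ (2 * k + 1) :=
              pow_le_pow_left₀ (by linarith) h2 _
          _ ≤ Real.exp (T/4) ^ (2 * k + 1) :=
              pow_le_pow_left₀ (by linarith) (by linarith [Real.add_one_le_exp (T/4)]) _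
          _ = Real.exp ((2 * (k:ℝ) + 1) * (T/4)) := by
              rw [← Real.exp_nat_mul]
              congr 1
              push_cast
              ring
      calc (t/2) ^ (2 * k + 1) * Real.exp (-((2 * (k:ℝ) + 1) / 4 + 1) * T)
          ≤ Real.exp ((2 * (k:ℝ) + 1) * (T/4)) * Real.exp (-((2 * (k:ℝ) + 1) / 4 + 1) * T) :=
            mul_le_mul_of_nonneg_right h3 (Real.exp_pos _).le
        _ = Real.exp ((2 * (k:ℝ) + 1) * (T/4) + -((2 * (k:ℝ) + 1) / 4 + 1) * T) :=
            (Real.exp_add _ _).symm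
        _ ≤ 1 := by
            rw [show (2 * (k:ℝ) + 1) * (T/4) + -((2 * (k:ℝ) + 1) / 4 + 1) * T = -T by ring,
              Real.exp_le_one_iff]
            linarith
  -- final assembly
  have hexpmul : Real.exp ((2 * ‖A‖ + (2 * (k:ℝ) + 1) / 4 + 1) * T)
      * Real.exp (-((2 * (k:ℝ) + 1) / 4 + 1) * T) = Real.exp (2 * ‖A‖ * T) := by
    rw [← Real.exp_add]
    congr 1
    ring
  calc c / 2 ^ (2 * k + 1) * t ^ (2 * (k + 1))
        / (4 * T * Real.exp ((2 * ‖A‖ + (2 * (k:ℝ) + 1) / 4 + 1) * T)) * ‖a‖ ^ 2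
      ≤ c / 2 ^ (2 * k + 1) * t ^ (2 * (k + 1))
        / (4 * T * Real.exp ((2 * ‖A‖ + (2 * (k:ℝ) + 1) / 4 + 1) * T))
        * (Real.exp (2 * ‖A‖ * T) * ‖b‖ ^ 2) := by
        refine mul_le_mul_of_nonneg_left hab2
          (div_nonneg (mul_nonneg (div_nonneg hc.le (by positivity)) (by positivity))
            (mul_nonneg (by linarith) (Real.exp_pos _).le))
    _ = (t / (4 * T)) * (c * ((t/2) ^ (2 * k + 1)
          * Real.exp (-((2 * (k:ℝ) + 1) / 4 + 1) * T)) * ‖b‖ ^ 2) := by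
        rw [← hexpmul, div_pow,
          show 2 * (k + 1) = (2 * k + 1) + 1 by ring, pow_succ]
        have h2n : (2:ℝ) ^ (2 * k + 1) ≠ 0 := by positivity
        have hE1 : Real.exp ((2 * ‖A‖ + (2 * (k:ℝ) + 1) / 4 + 1) * T) ≠ 0 :=
          (Real.exp_pos _).ne'
        field_simp
        ring
    _ ≤ (t / (4 * T)) * (c * min (t/2) 1 ^ (2 * k + 1) * ‖b‖ ^ 2) := by
        refine mul_le_mul_of_nonneg_left ?_ (by positivity)
        exact mul_le_mul_of_nonneg_right
          (mul_le_mul_of_nonneg_left hmin hc.le) (by positivity)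
    _ ≤ (t / (4 * T)) * ∫ u in (0:ℝ)..(t/2), h u :=
        mul_le_mul_of_nonneg_left hUb (by positivity)
    _ = ∫ s in (t/2)..t, (t / (4 * T)) * g s := by rw [hI2, hI3]
    _ ≤ ∫ s in (t/2)..t, (s * (T - s) / T ^ 2) * g s := hI1
    _ ≤ ∫ s in (0:ℝ)..t, (s * (T - s) / T ^ 2) * g s := hI0
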